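/- Let α ∈ [0,1] be a real number and let K_{n_1, n_2, …, n_p} be the complete p-partite graph with parts of sizes n_1, …, n_p and N = n_1 + ⋯ + n_p vertices. Then for each i with n_i ≥ 2, the number α(N − n_i) is an eigenvalue of A_α(K_{n_1, …, n_p}) whose eigenspace has dimension at least n_i − 1. -/

import Mathlib

open Matrix Polynomial BigOperators

/-- The generalized adjacency matrix `A_α(G) = α·D(G) + (1−α)·A(G)`. -/
noncomputable def Aalpha {V : Type*} [Fintype V] (G : SimpleGraph V) (α : ℝ) :
    Matrix V V ℝ :=
  letI := Classical.decEq V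
  letI := Classical.decRel G.Adj
  α • Matrix.diagonal (fun v => (G.degree v : ℝ)) + (1 - α) • G.adjMatrix ℝ

/-- `μ` is an eigenvalue of the real matrix `M`. -/
def Matrix.IsEigenvalue {n : Type*} [Fintype n] (M : Matrix n n ℝ) (μ : ℝ) : Prop :=
  ∃ v : n → ℝ, v ≠ 0 ∧ M.mulVec v = μ • v

/-- The dimension of the eigenspace of a real matrix `M` for the value `μ`. -/
noncomputable def eigMult {n : Type*} [Fintype n] (M : Matrix n n ℝ) (μ : ℝ) : ℕ :=
  letI := Classical.decEq n
  Module.finrank ℝ (Module.End.eigenspace (Matrix.toLin' M) μ)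

/-- The joined union `G[G_1, …, G_n]`. -/
def joinedUnion {n : ℕ} (G : SimpleGraph (Fin n)) (V : Fin n → Type*)
    (Gs : ∀ i, SimpleGraph (V i)) : SimpleGraph (Σ i, V i) :=
  SimpleGraph.fromRel (fun x y =>
    if h : x.1 = y.1 then (Gs y.1).Adj (h ▸ x.2) y.2 else G.Adj x.1 y.1)

/-- The join `G ∇ H` of two graphs. -/
def graphJoin {V W : Type*} (G : SimpleGraph V) (H : SimpleGraph W) :
    SimpleGraph (V ⊕ W) :=
  SimpleGraph.fromRel (fun x y =>
    match x, y with
    | Sum.inl a, Sum.inl b => G.Adj a b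
    | Sum.inr a, Sum.inr b => H.Adj a b
    | _, _ => True)

/-- The disjoint union `G ∪ H` of two graphs. -/
def disjUnion {V W : Type*} (G : SimpleGraph V) (H : SimpleGraph W) :
    SimpleGraph (V ⊕ W) :=
  SimpleGraph.fromRel (fun x y =>
    match x, y with
    | Sum.inl a, Sum.inl b => G.Adj a b
    | Sum.inr a, Sum.inr b => H.Adj a b
    | _, _ => False)

/-- Degree of a vertex (classical version). -/
noncomputable def gdegree {V : Type*} [Fintype V] (G : SimpleGraph V) (v : V) : ℕ :=
  letI := Classical.decEq V
  letI := Classical.decRel G.Adj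
  G.degree v

/-- The power graph of a group. -/
def powerGraph (G : Type*) [Group G] : SimpleGraph G :=
  SimpleGraph.fromRel (fun x y => ∃ k : ℕ, 0 < k ∧ y = x ^ k)

/-- eigenvalues of the complete multipartite graph. -/
theorem stmt_3 {α : ℝ} (hα : α ∈ Set.Icc (0 : ℝ) 1)
    {p : ℕ} (n : Fin p → ℕ) (i : Fin p) (hni : 2 ≤ n i) :
    n i - 1 ≤
      eigMult (Aalpha (SimpleGraph.completeMultipartiteGraph (fun j => Fin (n j))) α)
        (α * ((∑ j, (n j : ℝ)) - (n i : ℝ))) := by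
    classical
  set G := SimpleGraph.completeMultipartiteGraph (fun j => Fin (n j)) with hG
  set M := Aalpha G α with hM
  set μ : ℝ := α * ((∑ j, (n j : ℝ)) - (n i : ℝ)) with hμ
  -- degree computation
  have hdeg : ∀ u : Σ j, Fin (n j), ∀ inst : Fintype (G.neighborSet u),
      (@SimpleGraph.degree _ G u inst : ℝ) = (∑ j, (n j : ℝ)) - (n u.1 : ℝ) := by
    intro u inst
    have hd : @SimpleGraph.degree _ G u inst = Fintype.card (G.neighborSet u) :=
      (SimpleGraph.card_neighborSet_eq_degree G u).symm
    have he : G.neighborSet u ≃ {w : Σ j, Fin (n j) // ¬ u.1 = w.1} := by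
      refine Equiv.setCongr ?_
      ext w
      simp [SimpleGraph.neighborSet, hG]
      rfl
    have hcard : Fintype.card (G.neighborSet u) + n u.1 = ∑ j, n j := by
      rw [Fintype.card_congr he]
      have h2 : Fintype.card {w : Σ j, Fin (n j) // u.1 = w.1} = n u.1 := by
        rw [show (n u.1) = Fintype.card (Fin (n u.1)) from (Fintype.card_fin _).symm]
        refine Fintype.card_congr ?_
        refine ⟨fun w => Fin.cast (congrArg n w.2.symm) w.1.2, fun x => ⟨⟨u.1, x⟩, rfl⟩, ?_, ?_⟩
        · rintro ⟨⟨j, x⟩, h⟩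
          dsimp at h; subst h
          rfl
        · intro x; rfl
      have h3 : Fintype.card {w : Σ j, Fin (n j) // ¬ u.1 = w.1}
          = Fintype.card (Σ j, Fin (n j)) - Fintype.card {w : Σ j, Fin (n j) // u.1 = w.1} :=
        Fintype.card_subtype_compl _
      have h4 : Fintype.card (Σ j, Fin (n j)) = ∑ j, n j := by
        simp [Fintype.card_sigma]
      rw [h3, h2, h4]
      have h5 : n u.1 ≤ ∑ j, n j := by
        have := Finset.single_le_sum (f := fun j => n j) (fun j _ => Nat.zero_le _) (Finset.mem_univ u.1)
        simpa using this
      omega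
    have := congrArg (fun x : ℕ => (x : ℝ)) hcard
    push_cast at this
    rw [hd]
    linarith
  -- eigenvectors
  have hni' : n i - 1 < n i := by omega
  set x1 : Fin (n i - 1) → Σ j, Fin (n j) := fun k => ⟨i, ⟨k.1, lt_trans k.isLt hni'⟩⟩ with hx1
  set x2 : Σ j, Fin (n j) := ⟨i, ⟨n i - 1, hni'⟩⟩ with hx2
  set v : Fin (n i - 1) → (Σ j, Fin (n j)) → ℝ :=
    fun k => Pi.single (x1 k) 1 - Pi.single x2 1 with hv
  have hx1inj : Function.Injective x1 := by
    intro a b h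
    have h2 := congrArg (fun w : Σ j, Fin (n j) => (w.2 : ℕ)) h
    exact Fin.ext h2
  have hx1ne : ∀ k, x1 k ≠ x2 := by
    intro k h
    have h2 := congrArg (fun w : Σ j, Fin (n j) => (w.2 : ℕ)) h
    replace h2 : (k : ℕ) = n i - 1 := h2
    omega
  have hfst : ∀ k, (x1 k).1 = i := fun _ => rfl
  have hmem : ∀ k : Fin (n i - 1), M.mulVec (v k) = μ • v k := by
    intro k
    funext u
    have hsum : ∀ inst : Fintype (G.neighborSet u),
        (∑ x ∈ @SimpleGraph.neighborFinset _ G u inst, v k x) = 0 := by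
      intro inst
      have e1 : ∀ y : Σ j, Fin (n j),
          (∑ x ∈ @SimpleGraph.neighborFinset _ G u inst, Pi.single y (1:ℝ) x)
            = if G.Adj u y then 1 else 0 := by
        intro y
        simp only [Pi.single_apply]
        rw [Finset.sum_ite_eq' _ y (fun _ => (1:ℝ))]
        congr 1
        simp [SimpleGraph.mem_neighborFinset]
      simp only [hv, Pi.sub_apply, Finset.sum_sub_distrib, e1]
      have : G.Adj u (x1 k) ↔ G.Adj u x2 := by
        simp [hG, hx1, hx2]
      rw [if_congr this rfl rfl, sub_self]
    have hvu : ∀ inst : Fintype (G.neighborSet u),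
        ((@SimpleGraph.degree _ G u inst : ℕ) : ℝ) * v k u
          = ((∑ j, (n j : ℝ)) - (n i : ℝ)) * v k u := by
      intro inst
      by_cases hu : u.1 = i
      · rw [hdeg u _, hu]
      · have h1 : u ≠ x1 k := fun h => hu (congrArg Sigma.fst h)
        have h2 : u ≠ x2 := fun h => hu (congrArg Sigma.fst h)
        have : v k u = 0 := by simp [hv, Pi.single_apply, h1, h2]
        rw [this, mul_zero, mul_zero]
    simp only [hM, Aalpha, Matrix.add_mulVec, Matrix.smul_mulVec, Pi.add_apply,
      Pi.smul_apply, Matrix.mulVec_diagonal, SimpleGraph.adjMatrix_mulVec_apply,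
      smul_eq_mul, hsum, hμ]
    rw [hvu _]
    ring
  -- eigenspace membership and independence
  have hmemE : ∀ k, v k ∈ Module.End.eigenspace (Matrix.toLin' M) μ := by
    intro k
    rw [Module.End.mem_eigenspace_iff, Matrix.toLin'_apply]
    exact hmem k
  have hind : LinearIndependent ℝ v := by
    rw [Fintype.linearIndependent_iff]
    intro g hg k
    have hz : ∀ j, v j (x1 k) = if k = j then (1:ℝ) else 0 := by
      intro j
      simp only [hv, Pi.sub_apply, Pi.single_apply]
      rw [if_neg (hx1ne k), sub_zero]
      by_cases hkj : k = j
      · subst hkj; simp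
      · rw [if_neg (fun h => hkj (hx1inj h)), if_neg hkj]
    have h0 := congrFun hg (x1 k)
    simp only [Finset.sum_apply, Pi.smul_apply, smul_eq_mul, hz, Pi.zero_apply] at h0
    simpa [mul_ite, Finset.sum_ite_eq] using h0
  have hF : LinearIndependent ℝ
      (fun k : Fin (n i - 1) => (⟨v k, hmemE k⟩ : Module.End.eigenspace (Matrix.toLin' M) μ)) := by
    apply LinearIndependent.of_comp (Module.End.eigenspace (Matrix.toLin' M) μ).subtype
    exact hind
  calc n i - 1 = Fintype.card (Fin (n i - 1)) := by simp
    _ ≤ Module.finrank ℝ (Module.End.eigenspace (Matrix.toLin' M) μ) :=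
        hF.fintype_card_le_finrank
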